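/- In the derived category of a Dynkin quiver of type A_{N−1} with monotone orientation, the dimension of Ext¹ between consecutive objects in the sequence defined by x(j) (which alternates simple modules S_i shifted by even degrees and the maximal indecomposable M_θ shifted by odd degrees) is 1 between consecutive terms and 0 otherwise; equivalently, the resulting quiver Γ_J is the A_∞ quiver with monotone orientation. Concretely: for the linear A_{N−1} quiver 1 → 2 → ··· → N−1, setting X(j) = S_i[−2k] if j = i + kN with 1 ≤ i < N, and X(j) = M_θ[−2k+1] if j = kN (where θ = α₁ + ··· + α_{N−1}), one has dim Ext¹(X(j), X(j')) = 1 if j' = j + 1 and 0 otherwise. -/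

import Mathlib

/-- The `k`-th space of the "interval" representation `M_{α(j;ℓ)}` of the `A_∞` quiver
(vertices `ℤ`, arrows `k → k+1`): a copy of `ℂ` (as a submodule of `ℂ`) at the vertices
`j, j+1, …, j+ℓ-1` and `0` elsewhere. -/
noncomputable def intervalSub (j : ℤ) (ℓ : ℕ) (k : ℤ) : Submodule ℂ ℂ :=
  if j ≤ k ∧ k < j + (ℓ : ℤ) then ⊤ else ⊥

/-- The structure map `M_{α(j;ℓ)}(k) → M_{α(j;ℓ)}(k+1)` of the interval representation:
the identity inside the interval, `0` outside. -/
noncomputable def intervalMap (j : ℤ) (ℓ : ℕ) (k : ℤ) :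
    intervalSub j ℓ k →ₗ[ℂ] intervalSub j ℓ (k + 1) where
  toFun x := ⟨if j ≤ k + 1 ∧ k + 1 < j + (ℓ : ℤ) then (x : ℂ) else 0, by
    by_cases hc : j ≤ k + 1 ∧ k + 1 < j + (ℓ : ℤ)
    · simp [intervalSub, hc]
    · simp [intervalSub, hc]⟩
  map_add' x y := by
    apply Subtype.ext
    by_cases hc : j ≤ k + 1 ∧ k + 1 < j + (ℓ : ℤ) <;> simp [hc]
  map_smul' c x := by
    apply Subtype.ext
    by_cases hc : j ≤ k + 1 ∧ k + 1 < j + (ℓ : ℤ) <;> simp [hc]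

/-- The interval representation, as a family of structure maps. -/
noncomputable def ivMap (j : ℤ) (ℓ : ℕ) :
    ∀ k : ℤ, intervalSub j ℓ k →ₗ[ℂ] intervalSub j ℓ (k + 1) :=
  fun k => intervalMap j ℓ k

/-- `φ` is a morphism of representations of the `A_∞` quiver from `(V, f)` to `(W, g)`. -/
def IsRepMap {V W : ℤ → Type} [∀ k, AddCommGroup (V k)] [∀ k, Module ℂ (V k)]
    [∀ k, AddCommGroup (W k)] [∀ k, Module ℂ (W k)]
    (f : ∀ k, V k →ₗ[ℂ] V (k + 1)) (g : ∀ k, W k →ₗ[ℂ] W (k + 1))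
    (φ : ∀ k, V k →ₗ[ℂ] W k) : Prop :=
  ∀ k, (g k).comp (φ k) = (φ (k + 1)).comp (f k)

/-- The space of morphisms of representations from `(V, f)` to `(W, g)`, as a submodule
of `Π k, Hom(V k, W k)`. -/
def repHom {V W : ℤ → Type} [∀ k, AddCommGroup (V k)] [∀ k, Module ℂ (V k)]
    [∀ k, AddCommGroup (W k)] [∀ k, Module ℂ (W k)]
    (f : ∀ k, V k →ₗ[ℂ] V (k + 1)) (g : ∀ k, W k →ₗ[ℂ] W (k + 1)) :
    Submodule ℂ (∀ k, V k →ₗ[ℂ] W k) where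
  carrier := {φ | ∀ k, (g k).comp (φ k) = (φ (k + 1)).comp (f k)}
  add_mem' := by
    intro a b ha hb k
    simp only [Pi.add_apply, LinearMap.add_comp, LinearMap.comp_add, ha k, hb k]
  zero_mem' := by
    intro k
    simp
  smul_mem' := by
    intro c a ha k
    simp only [Pi.smul_apply, LinearMap.comp_smul, LinearMap.smul_comp, ha k]

/-- `dim Hom(M_{α(j;ℓ)}, M_{α(j';ℓ')})` in the category of representations. -/
noncomputable def homDimIv (j : ℤ) (ℓ : ℕ) (j' : ℤ) (ℓ' : ℕ) : ℕ :=
  Module.finrank ℂ ↥(repHom (ivMap j ℓ) (ivMap j' ℓ'))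

/-- The Euler form `⟨a, b⟩ = Σ_k a_k b_k - Σ_k a_k b_{k+1}` of the `A_∞` quiver
(vertices `ℤ`, arrows `k → k+1`), for finitely supported dimension vectors. -/
noncomputable def eulerFormA (a b : ℤ → ℤ) : ℤ :=
  ∑ᶠ k : ℤ, (a k * b k - a k * b (k + 1))

/-- The dimension vector of the interval module `M_{α(j;ℓ)}`. -/
def dimvIv (j : ℤ) (ℓ : ℕ) : ℤ → ℤ :=
  fun k => if j ≤ k ∧ k < j + (ℓ : ℤ) then 1 else 0

/-- `dim Ext¹(M_{α(j;ℓ)}, M_{α(j';ℓ')})` in the (hereditary) category of representations,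
computed via `dim Ext¹(A, B) = dim Hom(A, B) - ⟨dim A, dim B⟩`. -/
noncomputable def ext1Iv (j : ℤ) (ℓ : ℕ) (j' : ℤ) (ℓ' : ℕ) : ℤ :=
  (homDimIv j ℓ j' ℓ' : ℤ) - eulerFormA (dimvIv j ℓ) (dimvIv j' ℓ')

/-- `dim Ext¹_D(A[a], B[b]) = dim Hom_D(A, B[b - a + 1])` in the bounded derived category
`D` of the category of representations, for modules `A = M_{α(j;ℓ)}`, `B = M_{α(j';ℓ')}`
placed in cohomological shifts `a`, `b`: it is `Ext¹(A,B)` if `b = a`, `Hom(A,B)` if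
`b = a - 1`, and `0` otherwise (the category being hereditary). -/
noncomputable def ext1Shifted (j : ℤ) (ℓ : ℕ) (a : ℤ) (j' : ℤ) (ℓ' : ℕ) (b : ℤ) : ℤ :=
  if b = a then ext1Iv j ℓ j' ℓ'
  else if b = a - 1 then (homDimIv j ℓ j' ℓ' : ℤ)
  else 0

/-- The object `X(j)` of `D^b(ℂQ'-mod)` for the linear quiver `Q' = 1 → 2 → ⋯ → N-1`:
`X(j) = S_i[-2k]` (the simple at vertex `i`, i.e. the interval `M_{α(i;1)}`) if
`j = i + kN` with `1 ≤ i < N`, and `X(j) = M_θ[-2k+1]` (the sincere indecomposable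
`M_{α(1;N-1)}`) if `j = kN`.  Encoded as `(start, length, shift)`. -/
def Xobj (N : ℕ) (j : ℤ) : ℤ × ℕ × ℤ :=
  if j % (N : ℤ) = 0 then (1, N - 1, -2 * (j / (N : ℤ)) + 1)
  else (j % (N : ℤ), 1, -2 * (j / (N : ℤ)))

section Helpers
variable {j j' : ℤ} {ℓ ℓ' : ℕ} {k : ℤ}

lemma mem_intervalSub (h : j ≤ k ∧ k < j + (ℓ : ℤ)) (z : ℂ) : z ∈ intervalSub j ℓ k := by
  simp [intervalSub, h]

lemma coe_zero_of_not (h : ¬(j ≤ k ∧ k < j + (ℓ : ℤ))) (x : ↥(intervalSub j ℓ k)) :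
    (x : ℂ) = 0 := by
  obtain ⟨v, hv⟩ := x
  rw [show intervalSub j ℓ k = ⊥ from if_neg h] at hv
  simpa using hv

lemma coe_intervalMap (x : ↥(intervalSub j ℓ k)) :
    ((intervalMap j ℓ k x : ↥(intervalSub j ℓ (k+1))) : ℂ)
      = if j ≤ k + 1 ∧ k + 1 < j + (ℓ : ℤ) then (x : ℂ) else 0 := rfl

lemma mem_repHom_iff {V W : ℤ → Type} [∀ k, AddCommGroup (V k)] [∀ k, Module ℂ (V k)]
    [∀ k, AddCommGroup (W k)] [∀ k, Module ℂ (W k)]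
    (f : ∀ k, V k →ₗ[ℂ] V (k + 1)) (g : ∀ k, W k →ₗ[ℂ] W (k + 1))
    (φ : ∀ k, V k →ₗ[ℂ] W k) :
    φ ∈ repHom f g ↔ ∀ k, (g k).comp (φ k) = (φ (k + 1)).comp (f k) := Iff.rfl

end Helpers

/-- The candidate morphism `M_{α(j;ℓ)} → M_{α(j';ℓ')}` given by the scalar `c`. -/
noncomputable def phiAux (j : ℤ) (ℓ : ℕ) (j' : ℤ) (ℓ' : ℕ) (c : ℂ) (k : ℤ) :
    intervalSub j ℓ k →ₗ[ℂ] intervalSub j' ℓ' k where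
  toFun x := ⟨if j ≤ k ∧ j' ≤ k ∧ k < j' + (ℓ' : ℤ) then c * (x : ℂ) else 0, by
    by_cases hc : j ≤ k ∧ j' ≤ k ∧ k < j' + (ℓ' : ℤ)
    · rw [if_pos hc]; exact mem_intervalSub ⟨hc.2.1, hc.2.2⟩ _
    · rw [if_neg hc]; exact Submodule.zero_mem _⟩
  map_add' x y := by
    apply Subtype.ext
    simp only [Submodule.coe_add]
    split_ifs <;> ring
  map_smul' a x := by
    apply Subtype.ext
    simp only [SetLike.val_smul, smul_eq_mul, RingHom.id_apply]
    split_ifs <;> ring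

lemma coe_phiAux {j j' : ℤ} {ℓ ℓ' : ℕ} {c : ℂ} {k : ℤ} (x : ↥(intervalSub j ℓ k)) :
    ((phiAux j ℓ j' ℓ' c k x : ↥(intervalSub j' ℓ' k)) : ℂ)
      = if j ≤ k ∧ j' ≤ k ∧ k < j' + (ℓ' : ℤ) then c * (x : ℂ) else 0 := rfl

lemma phiAux_mem {j j' : ℤ} {ℓ ℓ' : ℕ} (c : ℂ) (h1 : j' ≤ j)
    (h3 : j' + (ℓ' : ℤ) ≤ j + (ℓ : ℤ)) :
    (fun k => phiAux j ℓ j' ℓ' c k) ∈ repHom (ivMap j ℓ) (ivMap j' ℓ') := by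
  intro k
  apply LinearMap.ext
  intro x
  apply Subtype.ext
  show ((intervalMap j' ℓ' k (phiAux j ℓ j' ℓ' c k x) : ↥(intervalSub j' ℓ' (k+1))) : ℂ)
      = ((phiAux j ℓ j' ℓ' c (k+1) (intervalMap j ℓ k x) : ↥(intervalSub j' ℓ' (k+1))) : ℂ)
  rw [coe_intervalMap, coe_phiAux, coe_phiAux, coe_intervalMap]
  by_cases hx : j ≤ k ∧ k < j + (ℓ : ℤ)
  · obtain ⟨hx1, hx2⟩ := hx
    split_ifs <;> first | ring1 | (exfalso; omega)
  · rw [coe_zero_of_not hx x]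
    split_ifs <;> simp

/-- The linear map `ℂ → Hom(M_{α(j;ℓ)}, M_{α(j';ℓ')})`. -/
noncomputable def phiLin (j : ℤ) (ℓ : ℕ) (j' : ℤ) (ℓ' : ℕ) (h1 : j' ≤ j)
    (h3 : j' + (ℓ' : ℤ) ≤ j + (ℓ : ℤ)) :
    ℂ →ₗ[ℂ] ↥(repHom (ivMap j ℓ) (ivMap j' ℓ')) where
  toFun c := ⟨fun k => phiAux j ℓ j' ℓ' c k, phiAux_mem c h1 h3⟩
  map_add' c d := by
    apply Subtype.ext
    funext k
    apply LinearMap.ext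
    intro x
    apply Subtype.ext
    show ((phiAux j ℓ j' ℓ' (c + d) k x : ↥(intervalSub j' ℓ' k)) : ℂ)
        = ((phiAux j ℓ j' ℓ' c k x : ↥(intervalSub j' ℓ' k)) : ℂ)
          + ((phiAux j ℓ j' ℓ' d k x : ↥(intervalSub j' ℓ' k)) : ℂ)
    rw [coe_phiAux, coe_phiAux, coe_phiAux]
    split_ifs <;> ring
  map_smul' a c := by
    apply Subtype.ext
    funext k
    apply LinearMap.ext
    intro x
    apply Subtype.ext
    show ((phiAux j ℓ j' ℓ' (a * c) k x : ↥(intervalSub j' ℓ' k)) : ℂ)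
        = a * ((phiAux j ℓ j' ℓ' c k x : ↥(intervalSub j' ℓ' k)) : ℂ)
    rw [coe_phiAux, coe_phiAux]
    split_ifs <;> ring

lemma homDimIv_eq_one {j j' : ℤ} {ℓ ℓ' : ℕ} (h1 : j' ≤ j) (h2 : j < j' + (ℓ' : ℤ))
    (h3 : j' + (ℓ' : ℤ) ≤ j + (ℓ : ℤ)) :
    homDimIv j ℓ j' ℓ' = 1 := by
  have hmemj : ∀ k : ℤ, j ≤ k → k < j' + (ℓ' : ℤ) → ((1 : ℂ) ∈ intervalSub j ℓ k) := by
    intro k hk hk'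
    exact mem_intervalSub ⟨hk, by omega⟩ 1
  have hbij : Function.Bijective (phiLin j ℓ j' ℓ' h1 h3) := by
    constructor
    · -- injective
      intro c d hcd
      have h := congrArg (fun ψ : ↥(repHom (ivMap j ℓ) (ivMap j' ℓ')) =>
        ((ψ.1 j ⟨1, hmemj j le_rfl h2⟩ : ↥(intervalSub j' ℓ' j)) : ℂ)) hcd
      rw [show ((phiLin j ℓ j' ℓ' h1 h3) c).1 j = phiAux j ℓ j' ℓ' c j from rfl,
          show ((phiLin j ℓ j' ℓ' h1 h3) d).1 j = phiAux j ℓ j' ℓ' d j from rfl] at h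
      rw [coe_phiAux, coe_phiAux, if_pos ⟨le_rfl, h1, h2⟩, if_pos ⟨le_rfl, h1, h2⟩] at h
      simpa using h
    · -- surjective
      rintro ⟨φ, hφ⟩
      set c : ℂ := ((φ j ⟨1, hmemj j le_rfl h2⟩ : ↥(intervalSub j' ℓ' j)) : ℂ) with hc
      -- key: the value of φ on 1 is constantly c across the overlap
      have key2 : ∀ n : ℕ, ∀ k, k = j + (n : ℤ) → k < j' + (ℓ' : ℤ) →
          ∀ hm : (1 : ℂ) ∈ intervalSub j ℓ k,
          ((φ k ⟨1, hm⟩ : ↥(intervalSub j' ℓ' k)) : ℂ) = c := by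
        intro n
        induction n with
        | zero =>
          intro k hkj hlt hm
          have hkj' : k = j := by push_cast at hkj; omega
          subst hkj'
          rfl
        | succ n ih =>
          intro k hkj hlt hm
          have hkj' : k = (j + (n : ℤ)) + 1 := by push_cast at hkj; omega
          subst hkj'
          have hmk : (1 : ℂ) ∈ intervalSub j ℓ (j + (n : ℤ)) :=
            hmemj _ (by omega) (by omega)
          have hcon := hφ (j + (n : ℤ))
          have happ := congrArg
            (fun ψ => ((ψ ⟨1, hmk⟩ : ↥(intervalSub j' ℓ' (j + (n : ℤ) + 1))) : ℂ)) hcon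
          simp only [LinearMap.comp_apply] at happ
          have hfk : (ivMap j ℓ (j + (n : ℤ))) ⟨1, hmk⟩ = ⟨1, hm⟩ := by
            apply Subtype.ext
            show (if j ≤ j + (n : ℤ) + 1 ∧ j + (n : ℤ) + 1 < j + (ℓ : ℤ) then (1:ℂ) else 0) = 1
            rw [if_pos ⟨by omega, by omega⟩]
          rw [hfk] at happ
          have hgv : ((ivMap j' ℓ' (j + (n : ℤ))
                (φ (j + (n : ℤ)) ⟨1, hmk⟩) : ↥(intervalSub j' ℓ' (j + (n : ℤ) + 1))) : ℂ)
              = ((φ (j + (n : ℤ)) ⟨1, hmk⟩ : ↥(intervalSub j' ℓ' (j + (n : ℤ)))) : ℂ) := by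
            rw [show ((ivMap j' ℓ' (j + (n : ℤ))) = intervalMap j' ℓ' (j + (n : ℤ))) from rfl,
              coe_intervalMap, if_pos ⟨by omega, by omega⟩]
          rw [hgv, ih (j + (n : ℤ)) rfl (by omega) hmk] at happ
          exact happ.symm
      have key : ∀ k, j ≤ k → ∀ hm : (1 : ℂ) ∈ intervalSub j ℓ k,
          k < j' + (ℓ' : ℤ) → ((φ k ⟨1, hm⟩ : ↥(intervalSub j' ℓ' k)) : ℂ) = c := by
        intro k hk hm hlt
        exact key2 (k - j).toNat k (by omega) hlt hm
      refine ⟨c, ?_⟩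
      apply Subtype.ext
      funext k
      apply LinearMap.ext
      intro x
      apply Subtype.ext
      show ((phiAux j ℓ j' ℓ' c k x : ↥(intervalSub j' ℓ' k)) : ℂ)
          = ((φ k x : ↥(intervalSub j' ℓ' k)) : ℂ)
      rw [coe_phiAux]
      by_cases hcnd : j ≤ k ∧ j' ≤ k ∧ k < j' + (ℓ' : ℤ)
      · rw [if_pos hcnd]
        obtain ⟨hk1, hk2, hk3⟩ := hcnd
        have hm : (1 : ℂ) ∈ intervalSub j ℓ k := hmemj k hk1 hk3
        have hxv : x = (x : ℂ) • (⟨1, hm⟩ : ↥(intervalSub j ℓ k)) := by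
          apply Subtype.ext
          simp
        rw [hxv, map_smul]
        have := key k hk1 hm hk3
        simp only [SetLike.val_smul, smul_eq_mul, this]
        ring
      · rw [if_neg hcnd]
        rcases not_and_or.mp hcnd with h | h
        · have hx0 : x = 0 := Subtype.ext (coe_zero_of_not (fun hh => h hh.1) x)
          rw [hx0, map_zero]
          simp
        · have : ¬ (j' ≤ k ∧ k < j' + (ℓ' : ℤ)) := by
            rcases not_and_or.mp h with h' | h'
            · exact fun hh => h' hh.1
            · exact fun hh => h' hh.2
          exact (coe_zero_of_not this _).symm
  have e : ℂ ≃ₗ[ℂ] ↥(repHom (ivMap j ℓ) (ivMap j' ℓ')) :=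
    LinearEquiv.ofBijective _ hbij
  unfold homDimIv
  rw [← e.finrank_eq, Module.finrank_self]

lemma homDimIv_eq_zero {j j' : ℤ} {ℓ ℓ' : ℕ}
    (h : repHom (ivMap j ℓ) (ivMap j' ℓ') = ⊥) :
    homDimIv j ℓ j' ℓ' = 0 := by
  unfold homDimIv
  rw [h]
  exact finrank_bot ℂ _

/-- disjoint supports (used for simples at distinct vertices) -/
lemma repHom_eq_bot_disjoint {j j' : ℤ} {ℓ ℓ' : ℕ}
    (h : ∀ k : ℤ, ¬(j ≤ k ∧ k < j + (ℓ : ℤ)) ∨ ¬(j' ≤ k ∧ k < j' + (ℓ' : ℤ))) :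
    repHom (ivMap j ℓ) (ivMap j' ℓ') = ⊥ := by
  rw [Submodule.eq_bot_iff]
  intro φ hφ
  funext k
  apply LinearMap.ext
  intro x
  apply Subtype.ext
  show ((φ k x : ↥(intervalSub j' ℓ' k)) : ℂ) = ((0 : ↥(intervalSub j ℓ k) →ₗ[ℂ] ↥(intervalSub j' ℓ' k)) x : ℂ)
  rw [LinearMap.zero_apply]
  rcases h k with h' | h'
  · have hx0 : x = 0 := Subtype.ext (coe_zero_of_not h' x)
    rw [hx0, map_zero]
    try rfl
  · exact coe_zero_of_not h' _

/-- `Hom(S_i, M_θ) = 0` for `i ≤ N - 2`. -/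
lemma repHom_st_bot {i : ℤ} {N : ℕ} (hi : 1 ≤ i) (hiN : i + 1 < (N : ℤ)) :
    repHom (ivMap i 1) (ivMap 1 (N - 1)) = ⊥ := by
  have hcast : ((N - 1 : ℕ) : ℤ) = (N : ℤ) - 1 := by omega
  rw [Submodule.eq_bot_iff]
  intro φ hφ
  have hzi : ∀ x : ↥(intervalSub i 1 i), ((φ i x : ↥(intervalSub 1 (N-1) i)) : ℂ) = 0 := by
    intro x
    have hcon := hφ i
    have happ := congrArg (fun ψ => ((ψ x : ↥(intervalSub 1 (N-1) (i+1))) : ℂ)) hcon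
    simp only [LinearMap.comp_apply] at happ
    have hf0 : (ivMap i 1 i) x = 0 := by
      apply Subtype.ext
      show (if i ≤ i + 1 ∧ i + 1 < i + ((1:ℕ) : ℤ) then (x:ℂ) else 0) = 0
      rw [if_neg (by push_cast; omega)]
    rw [hf0, map_zero] at happ
    have hg : ((ivMap 1 (N-1) i (φ i x) : ↥(intervalSub 1 (N-1) (i+1))) : ℂ)
        = ((φ i x : ↥(intervalSub 1 (N-1) i)) : ℂ) := by
      rw [show ((ivMap 1 (N-1) i) = intervalMap 1 (N-1) i) from rfl, coe_intervalMap,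
        if_pos ⟨by omega, by rw [hcast]; omega⟩]
    rw [hg] at happ
    rw [happ]
    try simp
  funext k
  apply LinearMap.ext
  intro x
  apply Subtype.ext
  show ((φ k x : ↥(intervalSub 1 (N-1) k)) : ℂ)
      = ((0 : ↥(intervalSub i 1 k) →ₗ[ℂ] ↥(intervalSub 1 (N-1) k)) x : ℂ)
  rw [LinearMap.zero_apply]
  by_cases hk : k = i
  · subst hk
    rw [hzi x]
    try simp
  · have hx0 : x = 0 := Subtype.ext (coe_zero_of_not (by push_cast; omega) x)
    rw [hx0]
    simp

/-- `Hom(M_θ, S_i) = 0` for `i ≥ 2`. -/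
lemma repHom_ts_bot {i : ℤ} {N : ℕ} (hi : 2 ≤ i) (hiN : i < (N : ℤ)) :
    repHom (ivMap 1 (N - 1)) (ivMap i 1) = ⊥ := by
  have hcast : ((N - 1 : ℕ) : ℤ) = (N : ℤ) - 1 := by omega
  obtain ⟨m, rfl⟩ : ∃ m, i = m + 1 := ⟨i - 1, by ring⟩
  rw [Submodule.eq_bot_iff]
  intro φ hφ
  have hzi : ∀ x : ↥(intervalSub 1 (N-1) (m+1)), ((φ (m+1) x : ↥(intervalSub (m+1) 1 (m+1))) : ℂ) = 0 := by
    intro x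
    have hmx : (x : ℂ) ∈ intervalSub 1 (N-1) m :=
      mem_intervalSub ⟨by omega, by rw [hcast]; omega⟩ _
    have hcon := hφ m
    have happ := congrArg (fun ψ => ((ψ ⟨(x : ℂ), hmx⟩ : ↥(intervalSub (m+1) 1 (m+1))) : ℂ)) hcon
    simp only [LinearMap.comp_apply] at happ
    have hf : (ivMap 1 (N-1) m) ⟨(x : ℂ), hmx⟩ = x := by
      apply Subtype.ext
      show (if 1 ≤ m + 1 ∧ m + 1 < 1 + ((N-1 : ℕ) : ℤ) then (x:ℂ) else 0) = (x : ℂ)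
      rw [if_pos ⟨by omega, by rw [hcast]; omega⟩]
    rw [hf] at happ
    have hz : ((φ m) ⟨(x : ℂ), hmx⟩ : ↥(intervalSub (m+1) 1 m)) = 0 := by
      apply Subtype.ext
      exact coe_zero_of_not (by push_cast; omega) _
    rw [hz, map_zero] at happ
    exact happ.symm
  funext k
  apply LinearMap.ext
  intro x
  apply Subtype.ext
  show ((φ k x : ↥(intervalSub (m+1) 1 k)) : ℂ)
      = ((0 : ↥(intervalSub 1 (N-1) k) →ₗ[ℂ] ↥(intervalSub (m+1) 1 k)) x : ℂ)
  rw [LinearMap.zero_apply]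
  by_cases hk : k = m + 1
  · subst hk
    rw [hzi x]
    try simp
  · exact coe_zero_of_not (by push_cast; omega) _

lemma euler_ss (i i' : ℤ) :
    eulerFormA (dimvIv i 1) (dimvIv i' 1)
      = (if i' = i then 1 else 0) - (if i' = i + 1 then 1 else 0) := by
  unfold eulerFormA
  rw [finsum_eq_single _ i ?_]
  · unfold dimvIv
    push_cast
    split_ifs <;> omega
  · intro x hx
    unfold dimvIv
    push_cast
    rw [if_neg (by omega)]
    ring

lemma euler_tt {N : ℕ} (hN : 2 ≤ N) :
    eulerFormA (dimvIv 1 (N-1)) (dimvIv 1 (N-1)) = 1 := by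
  have hcast : ((N - 1 : ℕ) : ℤ) = (N : ℤ) - 1 := by omega
  unfold eulerFormA
  rw [finsum_eq_single _ ((N : ℤ) - 1) ?_]
  · unfold dimvIv
    rw [hcast]
    split_ifs <;> omega
  · intro x hx
    unfold dimvIv
    rw [hcast]
    split_ifs <;> omega

lemma homDim_ss (i i' : ℤ) : homDimIv i 1 i' 1 = if i' = i then 1 else 0 := by
  by_cases h : i' = i
  · subst h
    rw [if_pos rfl]
    exact homDimIv_eq_one le_rfl (by push_cast; omega) (by push_cast; omega)
  · rw [if_neg h]
    apply homDimIv_eq_zero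
    apply repHom_eq_bot_disjoint
    intro k
    push_cast
    omega

lemma ext1_ss (i i' : ℤ) : ext1Iv i 1 i' 1 = if i' = i + 1 then 1 else 0 := by
  unfold ext1Iv
  rw [homDim_ss, euler_ss]
  split_ifs <;> push_cast <;> omega

lemma homDim_tt {N : ℕ} (hN : 2 ≤ N) : homDimIv 1 (N-1) 1 (N-1) = 1 := by
  have hcast : ((N - 1 : ℕ) : ℤ) = (N : ℤ) - 1 := by omega
  refine homDimIv_eq_one le_rfl ?_ ?_ <;> rw [hcast] <;> omega

lemma ext1_tt {N : ℕ} (hN : 2 ≤ N) : ext1Iv 1 (N-1) 1 (N-1) = 0 := by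
  unfold ext1Iv
  rw [homDim_tt hN, euler_tt hN]
  ring

lemma homDim_st {i : ℤ} {N : ℕ} (hN : 2 ≤ N) (hi : 1 ≤ i) (hiN : i < (N : ℤ)) :
    homDimIv i 1 1 (N-1) = if i = (N : ℤ) - 1 then 1 else 0 := by
  have hcast : ((N - 1 : ℕ) : ℤ) = (N : ℤ) - 1 := by omega
  by_cases h : i = (N : ℤ) - 1
  · rw [if_pos h]
    exact homDimIv_eq_one (by omega) (by omega) (by push_cast; omega)
  · rw [if_neg h]
    exact homDimIv_eq_zero (repHom_st_bot hi (by omega))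

lemma homDim_ts {i : ℤ} {N : ℕ} (hN : 2 ≤ N) (hi : 1 ≤ i) (hiN : i < (N : ℤ)) :
    homDimIv 1 (N-1) i 1 = if i = 1 then 1 else 0 := by
  have hcast : ((N - 1 : ℕ) : ℤ) = (N : ℤ) - 1 := by omega
  by_cases h : i = 1
  · subst h
    rw [if_pos rfl]
    refine homDimIv_eq_one le_rfl ?_ ?_ <;> push_cast <;> try omega
  · rw [if_neg h]
    exact homDimIv_eq_zero (repHom_ts_bot (by omega) hiN)

lemma carry_key {n q q' r r' : ℤ} (hn : 0 < n) (h : n * q' + r' = n * q + r + 1)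
    (h1 : 0 ≤ r) (h2 : r < n) (h3 : 0 ≤ r') (h4 : r' < n) :
    (q' = q ∧ r' = r + 1) ∨ (q' = q + 1 ∧ r = n - 1 ∧ r' = 0) := by
  have hd : n * (q' - q) = r + 1 - r' := by linear_combination h
  rcases lt_trichotomy (q' - q) 0 with hlt | heq | hgt
  · exfalso
    have hle : q' - q ≤ -1 := by omega
    nlinarith
  · left
    rw [heq, mul_zero] at hd
    omega
  · rcases eq_or_lt_of_le (by omega : (1:ℤ) ≤ q' - q) with he | hlt2
    · right
      rw [← he, mul_one] at hd
      omega
    · exfalso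
      have hle : 2 ≤ q' - q := by omega
      nlinarith

theorem aux_statement14 (N : ℕ) (hN : 2 ≤ N) :
    ∀ j j' : ℤ,
      ext1Shifted (Xobj N j).1 (Xobj N j).2.1 (Xobj N j).2.2
          (Xobj N j').1 (Xobj N j').2.1 (Xobj N j').2.2 =
        if j' = j + 1 then 1 else 0 := by
  have hN0 : (0:ℤ) < (N:ℤ) := by omega
  intro j j'
  obtain ⟨q, r, hqr, hr1, hr2, hmod, hdiv⟩ :
      ∃ q r : ℤ, (N:ℤ) * q + r = j ∧ 0 ≤ r ∧ r < (N:ℤ) ∧ j % (N:ℤ) = r ∧ j / (N:ℤ) = q :=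
    ⟨j / N, j % N, Int.mul_ediv_add_emod j N, Int.emod_nonneg j (by omega),
      Int.emod_lt_of_pos j hN0, rfl, rfl⟩
  obtain ⟨q', r', hqr', hr1', hr2', hmod', hdiv'⟩ :
      ∃ q' r' : ℤ, (N:ℤ) * q' + r' = j' ∧ 0 ≤ r' ∧ r' < (N:ℤ) ∧ j' % (N:ℤ) = r' ∧ j' / (N:ℤ) = q' :=
    ⟨j' / N, j' % N, Int.mul_ediv_add_emod j' N, Int.emod_nonneg j' (by omega),
      Int.emod_lt_of_pos j' hN0, rfl, rfl⟩
  by_cases hr : r = 0 <;> by_cases hrr : r' = 0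
  · -- both θ
    subst hr hrr
    have hX : Xobj N j = (1, N - 1, -2 * q + 1) := by simp [Xobj, hmod, hdiv]
    have hX' : Xobj N j' = (1, N - 1, -2 * q' + 1) := by simp [Xobj, hmod', hdiv']
    rw [hX, hX']
    simp only [ext1Shifted]
    by_cases hq : q' = q
    · rw [hq] at hqr' ⊢
      rw [if_pos rfl, ext1_tt hN]
      have hne : j' ≠ j + 1 := by
        generalize hA : (N:ℤ) * q = A at hqr hqr'
        omega
      rw [if_neg hne]
    · rw [if_neg (by omega), if_neg (by omega)]
      have hne : j' ≠ j + 1 := by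
        intro he
        have h : (N:ℤ) * q' + 0 = (N:ℤ) * q + 0 + 1 := by
          rw [hqr', he, ← hqr]
        rcases carry_key hN0 h le_rfl (by omega) le_rfl (by omega) with ⟨_, h2⟩ | ⟨_, h2, _⟩
        · omega
        · omega
      rw [if_neg hne]
  · -- θ then simple
    subst hr
    have hX : Xobj N j = (1, N - 1, -2 * q + 1) := by simp [Xobj, hmod, hdiv]
    have hX' : Xobj N j' = (r', 1, -2 * q') := by simp [Xobj, hmod', hdiv', hrr]
    rw [hX, hX']
    simp only [ext1Shifted]
    by_cases hq : q' = q
    · rw [hq] at hqr' ⊢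
      rw [if_neg (by omega), if_pos (by omega), homDim_ts hN (by omega) hr2']
      have hiff : r' = 1 ↔ j' = j + 1 := by
        generalize hA : (N:ℤ) * q = A at hqr hqr'
        omega
      push_cast
      simp only [hiff]
    · rw [if_neg (by omega), if_neg (by omega)]
      have hne : j' ≠ j + 1 := by
        intro he
        have h : (N:ℤ) * q' + r' = (N:ℤ) * q + 0 + 1 := by
          rw [hqr', he, ← hqr]
        rcases carry_key hN0 h le_rfl (by omega) hr1' hr2' with ⟨h1, _⟩ | ⟨_, h2, _⟩
        · exact hq h1
        · omega
      rw [if_neg hne]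
  · -- simple then θ
    subst hrr
    have hX : Xobj N j = (r, 1, -2 * q) := by simp [Xobj, hmod, hdiv, hr]
    have hX' : Xobj N j' = (1, N - 1, -2 * q' + 1) := by simp [Xobj, hmod', hdiv']
    rw [hX, hX']
    simp only [ext1Shifted]
    by_cases hq : q' = q + 1
    · subst hq
      rw [if_neg (by omega), if_pos (by omega), homDim_st hN (by omega) hr2]
      have hq2 : (N:ℤ) * (q + 1) = (N:ℤ) * q + N := by ring
      rw [hq2] at hqr'
      have hiff : r = (N:ℤ) - 1 ↔ j' = j + 1 := by
        generalize hA : (N:ℤ) * q = A at hqr hqr'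
        omega
      push_cast
      simp only [hiff]
    · rw [if_neg (by omega), if_neg (by omega)]
      have hne : j' ≠ j + 1 := by
        intro he
        have h : (N:ℤ) * q' + 0 = (N:ℤ) * q + r + 1 := by
          rw [hqr', he, ← hqr]
        rcases carry_key hN0 h hr1 hr2 le_rfl (by omega) with ⟨_, h2⟩ | ⟨h1, _, _⟩
        · omega
        · exact hq h1
      rw [if_neg hne]
  · -- both simple
    have hX : Xobj N j = (r, 1, -2 * q) := by simp [Xobj, hmod, hdiv, hr]
    have hX' : Xobj N j' = (r', 1, -2 * q') := by simp [Xobj, hmod', hdiv', hrr]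
    rw [hX, hX']
    simp only [ext1Shifted]
    by_cases hq : q' = q
    · rw [hq] at hqr' ⊢
      rw [if_pos rfl, ext1_ss]
      have hiff : r' = r + 1 ↔ j' = j + 1 := by
        generalize hA : (N:ℤ) * q = A at hqr hqr'
        omega
      simp only [hiff]
    · rw [if_neg (by omega), if_neg (by omega)]
      have hne : j' ≠ j + 1 := by
        intro he
        have h : (N:ℤ) * q' + r' = (N:ℤ) * q + r + 1 := by
          rw [hqr', he, ← hqr]
        rcases carry_key hN0 h hr1 hr2 hr1' hr2' with ⟨h1, _⟩ | ⟨_, _, h3⟩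
        · exact hq h1
        · exact hrr h3
      rw [if_neg hne]

/-- For the linear quiver of type `A_{N-1}` with monotone orientation,
the family `X(j)` defined above satisfies `dim Ext¹(X(j), X(j')) = 1` if `j' = j + 1`
and `0` otherwise; i.e. the resulting quiver `Γ_J` is the `A_∞` quiver with monotone
orientation. -/
theorem statement14 (N : ℕ) (hN : 2 ≤ N) :
    ∀ j j' : ℤ,
      ext1Shifted (Xobj N j).1 (Xobj N j).2.1 (Xobj N j).2.2
          (Xobj N j').1 (Xobj N j').2.1 (Xobj N j').2.2 =
        if j' = j + 1 then 1 else 0 := by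
  exact aux_statement14 N hN
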